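/- Let a spiral similarity centered at J map triangle ABC to triangle abc. For each vertex pair, let L, M, N be the intersections of the perpendicular bisectors of (JA, Ja), (JB, Jb), (JC, Jc) respectively. Then the same spiral-similarity structure holds: triangle LMN is directly similar to triangle ABC, and the similarity taking ABC to LMN is also centered at J. -/
import Mathlib

private lemma circ_aux (w X L : ℂ) (hwim : w.im ≠ 0) (hX : X ≠ 0)
    (h1 : dist L 0 = dist L X) (h2 : dist L 0 = dist L (w * X)) :
    L = (⟨1/2, (Complex.normSq w - w.re)/(2*w.im)⟩ : ℂ) * X := by
  have hns : (X.re^2 + X.im^2) ≠ 0 := by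
    intro h
    apply hX
    apply Complex.ext <;> simp only [Complex.zero_re, Complex.zero_im] <;>
      nlinarith [sq_nonneg X.re, sq_nonneg X.im]
  have e1 : 2*(L.re*X.re + L.im*X.im) = X.re^2 + X.im^2 := by
    have := congrArg (·^2) h1
    simp only [Complex.dist_eq, Complex.sq_norm, Complex.normSq_apply,
      Complex.sub_re, Complex.sub_im, Complex.zero_re, Complex.zero_im] at this
    nlinarith [this]
  have e2 : 2*(L.re*(w.re*X.re - w.im*X.im) + L.im*(w.re*X.im + w.im*X.re))
      = (w.re^2 + w.im^2)*(X.re^2 + X.im^2) := by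
    have := congrArg (·^2) h2
    simp only [Complex.dist_eq, Complex.sq_norm, Complex.normSq_apply,
      Complex.sub_re, Complex.sub_im, Complex.zero_re, Complex.zero_im,
      Complex.mul_re, Complex.mul_im] at this
    nlinarith [this]
  have e3 : (2*L.re*w.im) * (X.re^2 + X.im^2)
      = (w.im*X.re - (w.re^2 + w.im^2 - w.re)*X.im) * (X.re^2 + X.im^2) := by
    linear_combination (w.re*X.im + w.im*X.re) * e1 - X.im * e2
  have e4 : (2*L.im*w.im) * (X.re^2 + X.im^2)
      = ((w.re^2 + w.im^2 - w.re)*X.re + w.im*X.im) * (X.re^2 + X.im^2) := by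
    linear_combination X.re * e2 - (w.re*X.re - w.im*X.im) * e1
  have he3 := mul_right_cancel₀ hns e3
  have he4 := mul_right_cancel₀ hns e4
  apply Complex.ext
  · simp only [Complex.mul_re, Complex.normSq_apply]
    field_simp
    linarith [he3]
  · simp only [Complex.mul_im, Complex.normSq_apply]
    field_simp
    linarith [he4]

/-- With `J` at the origin, let the spiral similarity `z ↦ w z` (`w` non-real, `w ≠ 0`)
map `A, B, C` to `a = wA, b = wB, c = wC`, and let `L, M, N` be the circumcentres of
triangles `JAa, JBb, JCc` (the points equidistant from the triple).  Then `L = uA`,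
`M = uB`, `N = uC` for a common complex number `u`: triangle `LMN` is directly similar to
`ABC` via a spiral similarity also centred at `J`. -/
theorem stmt_17 (A B C : ℂ) (w : ℂ)
    (hw0 : w ≠ 0) (hwim : w.im ≠ 0)
    (hA0 : A ≠ 0) (hB0 : B ≠ 0) (hC0 : C ≠ 0)
    (L M N : ℂ)
    (hL : dist L 0 = dist L A ∧ dist L 0 = dist L (w * A))
    (hM : dist M 0 = dist M B ∧ dist M 0 = dist M (w * B))
    (hN : dist N 0 = dist N C ∧ dist N 0 = dist N (w * C)) :
    ∃ u : ℂ, u ≠ 0 ∧ L = u * A ∧ M = u * B ∧ N = u * C := by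
  refine ⟨⟨1/2, (Complex.normSq w - w.re)/(2*w.im)⟩, ?_, ?_, ?_, ?_⟩
  · intro h
    have : ((⟨1/2, (Complex.normSq w - w.re)/(2*w.im)⟩ : ℂ)).re = (0:ℂ).re := by rw [h]
    simp at this
  · exact circ_aux w A L hwim hA0 hL.1 hL.2
  · exact circ_aux w B M hwim hB0 hM.1 hM.2
  · exact circ_aux w C N hwim hC0 hN.1 hN.2
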